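/- Theorem 2.6, second part: Let g_1, …, g_n be gambles whose family avoids sure loss, and let f be another gamble such that the family {g_1, …, g_n, f} does not avoid sure loss. Then there exist λ_1, …, λ_n ≥ 0 such that for all ω ∈ Ω, f(ω) + Σ_{i=1}^{n} λ_i g_i(ω) ≤ Ē_D(f) < 0; that is, the combination f + Σ_{i=1}^{n} λ_i g_i results in a loss of at least |Ē_D(f)| in every outcome. -/

import Mathlib

/-- Conic Carathéodory: any nonnegative combination of vectors indexed by a finset `s`
can be rewritten as a nonnegative combination over a subset `t ⊆ s` on which the
vectors are linearly independent. -/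
lemma conic_caratheodory {E : Type*} [AddCommGroup E] [Module ℝ E]
    {ι : Type*} [DecidableEq ι] (v : ι → E) (s : Finset ι) :
    ∀ (x : E) (lam : ι → ℝ), (∀ i, 0 ≤ lam i) → x = ∑ i ∈ s, lam i • v i →
      ∃ t : Finset ι, t ⊆ s ∧ LinearIndependent ℝ (fun i : t => v i) ∧
        ∃ mu : ι → ℝ, (∀ i, 0 ≤ mu i) ∧ x = ∑ i ∈ t, mu i • v i := by
  induction s using Finset.strongInduction with
  | _ s ih =>
    intro x lam h0 hx
    by_cases hli : LinearIndependent ℝ (fun i : s => v i)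
    · exact ⟨s, subset_rfl, hli, lam, h0, hx⟩
    · obtain ⟨c, hcsum, j, hj⟩ := Fintype.not_linearIndependent_iff.mp hli
      -- extend `c` to `ι` by zero
      set C : ι → ℝ := fun i => if h : i ∈ s then c ⟨i, h⟩ else 0 with hC
      have hCsum : ∑ i ∈ s, C i • v i = 0 := by
        rw [← Finset.sum_attach s (fun i => C i • v i)]
        simpa [C] using hcsum
      have hCj : C (j : ι) ≠ 0 := by simpa [C, j.2] using hj
      -- reduce to the case where some coefficient is positive
      have key : ∀ D : ι → ℝ, (∀ i, i ∉ s → D i = 0) → (∑ i ∈ s, D i • v i = 0) →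
          (∃ i ∈ s, 0 < D i) →
          ∃ t : Finset ι, t ⊆ s ∧ LinearIndependent ℝ (fun i : t => v i) ∧
            ∃ mu : ι → ℝ, (∀ i, 0 ≤ mu i) ∧ x = ∑ i ∈ t, mu i • v i := by
        intro D hDout hDsum hDpos
        set T : Finset ι := s.filter (fun i => 0 < D i) with hT
        have hTne : T.Nonempty := by
          obtain ⟨i, hi, hip⟩ := hDpos
          exact ⟨i, Finset.mem_filter.mpr ⟨hi, hip⟩⟩
        obtain ⟨i0, hi0T, hi0⟩ := Finset.exists_mem_eq_inf' hTne (fun i => lam i / D i)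
        have hi0s : i0 ∈ s := (Finset.mem_filter.mp hi0T).1
        have hDi0 : 0 < D i0 := (Finset.mem_filter.mp hi0T).2
        set r : ℝ := T.inf' hTne (fun i => lam i / D i) with hr
        have hr0 : 0 ≤ r := by
          rw [hi0]
          exact div_nonneg (h0 i0) hDi0.le
        set lam' : ι → ℝ := fun i => lam i - r * D i with hlam'
        have hlam'0 : ∀ i, 0 ≤ lam' i := by
          intro i
          by_cases his : i ∈ s
          · by_cases hpos : 0 < D i
            · have hrle : r ≤ lam i / D i :=
                Finset.inf'_le _ (Finset.mem_filter.mpr ⟨his, hpos⟩)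
              have : r * D i ≤ lam i := by
                rw [← div_mul_cancel₀ (lam i) hpos.ne']
                exact mul_le_mul_of_nonneg_right hrle hpos.le
              simpa [lam', sub_nonneg] using this
            · push_neg at hpos
              have : r * D i ≤ 0 := mul_nonpos_of_nonneg_of_nonpos hr0 hpos
              have := sub_nonneg.mpr (this.trans (h0 i))
              simp only [lam']
              nlinarith [h0 i, mul_nonpos_of_nonneg_of_nonpos hr0 hpos]
          · simp [lam', hDout i his, h0 i]
        have hlam'i0 : lam' i0 = 0 := by
          simp only [lam', hi0]
          field_simp
          ring
        have hxsum : x = ∑ i ∈ s.erase i0, lam' i • v i := by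
          have h1 : ∑ i ∈ s, lam' i • v i = ∑ i ∈ s, lam i • v i - r • ∑ i ∈ s, D i • v i := by
            rw [Finset.smul_sum, ← Finset.sum_sub_distrib]
            refine Finset.sum_congr rfl fun i _ => ?_
            simp [lam', sub_smul, smul_smul]
          have h2 : ∑ i ∈ s, lam' i • v i = x := by
            rw [h1, hDsum, hx]; simp
          rw [← h2, ← Finset.add_sum_erase s _ hi0s, hlam'i0]
          simp
        obtain ⟨t, hts, hli', mu, hmu0, hxmu⟩ :=
          ih (s.erase i0) (Finset.erase_ssubset hi0s) x lam' hlam'0 hxsum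
        exact ⟨t, hts.trans (Finset.erase_subset _ _), hli', mu, hmu0, hxmu⟩
      rcases hCj.lt_or_gt with hneg | hpos
      · refine key (fun i => -C i) (fun i his => by simp [C, his]) ?_ ⟨j, j.2, by simpa using hneg⟩
        rw [← neg_zero, ← hCsum, ← Finset.sum_neg_distrib]
        exact Finset.sum_congr rfl fun i _ => by simp
      · exact key C (fun i his => by simp [C, his]) hCsum ⟨j, j.2, hpos⟩

/-- The cone generated by finitely many vectors in a finite-dimensional space is closed. -/
lemma cone_isClosed {E : Type*} [NormedAddCommGroup E] [NormedSpace ℝ E]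
    [FiniteDimensional ℝ E] {ι : Type*} [Fintype ι] [DecidableEq ι] (v : ι → E) :
    IsClosed {x : E | ∃ c : ι → ℝ, (∀ i, 0 ≤ c i) ∧ x = ∑ i, c i • v i} := by
  have hunion : {x : E | ∃ c : ι → ℝ, (∀ i, 0 ≤ c i) ∧ x = ∑ i, c i • v i} =
      ⋃ t ∈ {t : Finset ι | LinearIndependent ℝ (fun i : t => v i)},
        {x : E | ∃ c : ι → ℝ, (∀ i, 0 ≤ c i) ∧ x = ∑ i ∈ t, c i • v i} := by
    ext x
    simp only [Set.mem_setOf_eq, Set.mem_iUnion]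
    constructor
    · rintro ⟨c, hc0, rfl⟩
      obtain ⟨t, -, hli, mu, hmu0, hxmu⟩ :=
        conic_caratheodory v Finset.univ (∑ i, c i • v i) c hc0 rfl
      exact ⟨t, hli, mu, hmu0, hxmu⟩
    · rintro ⟨t, -, c, hc0, rfl⟩
      refine ⟨fun i => if i ∈ t then c i else 0, fun i => by by_cases h : i ∈ t <;> simp [h, hc0 i], ?_⟩
      rw [← Finset.sum_subset (Finset.subset_univ t) (fun i _ hit => by simp [hit])]
      exact Finset.sum_congr rfl fun i hit => by simp [hit]
  rw [hunion]
  refine Set.Finite.isClosed_biUnion (Set.toFinite _) fun t hli => ?_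
  -- the cone on a linearly independent family is a closed embedding image of the
  -- nonnegative orthant
  set L : (t → ℝ) →ₗ[ℝ] E :=
    { toFun := fun c => ∑ i, c i • v i
      map_add' := fun a b => by simp [add_smul, Finset.sum_add_distrib]
      map_smul' := fun m a => by simp [Finset.smul_sum, smul_smul] } with hL
  have hker : LinearMap.ker L = ⊥ := by
    rw [LinearMap.ker_eq_bot']
    intro c hc
    funext i
    exact Fintype.linearIndependent_iff.mp hli c hc i
  have hemb := LinearMap.isClosedEmbedding_of_injective hker (F := E)
  have himg : {x : E | ∃ c : ι → ℝ, (∀ i, 0 ≤ c i) ∧ x = ∑ i ∈ t, c i • v i} =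
      L '' {c : t → ℝ | ∀ i, 0 ≤ c i} := by
    ext x
    simp only [Set.mem_setOf_eq, Set.mem_image]
    constructor
    · rintro ⟨c, hc0, rfl⟩
      refine ⟨fun i => c i, fun i => hc0 i, ?_⟩
      simp only [hL, LinearMap.coe_mk, AddHom.coe_mk]
      exact (Finset.sum_attach t (fun i => c i • v i)).symm ▸
        (Finset.sum_attach t (fun i => c i • v i))
    · rintro ⟨c, hc0, rfl⟩
      refine ⟨fun i => if h : i ∈ t then c ⟨i, h⟩ else 0,
        fun i => by by_cases h : i ∈ t <;> simp [h, hc0], ?_⟩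
      simp only [hL, LinearMap.coe_mk, AddHom.coe_mk]
      rw [← Finset.sum_attach t (fun i => (if h : i ∈ t then c ⟨i, h⟩ else 0) • v i)]
      exact Finset.sum_congr rfl fun i _ => by simp [i.2]
  rw [himg]
  refine hemb.isClosedMap _ ?_
  have : {c : t → ℝ | ∀ i, 0 ≤ c i} = ⋂ i, {c : t → ℝ | 0 ≤ c i} := by
    ext c; simp
  rw [this]
  exact isClosed_iInter fun i => isClosed_le continuous_const (continuous_apply i)

/-- The upper natural extension of a gamble `f` relative to the finite family
of gambles `g`. -/
noncomputable def upperExtD {Ω : Type*} [Fintype Ω] {n : ℕ}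
    (g : Fin n → Ω → ℝ) (f : Ω → ℝ) : ℝ :=
  sInf {β : ℝ | ∃ lam : Fin n → ℝ, (∀ i, 0 ≤ lam i) ∧
    ∀ ω : Ω, ∑ i : Fin n, lam i * g i ω ≤ β - f ω}

/-- Theorem 2.6, second part: if the family extended with `f` does not avoid
sure loss, then some nonnegative combination `f + ∑ λᵢ gᵢ` loses at least
`|Ē_D(f)|` in every outcome. -/
theorem sure_loss_combination_of_not_avoids
    {Ω : Type*} [Fintype Ω] [Nonempty Ω] (n : ℕ) (g : Fin n → Ω → ℝ)
    (hasl : ∀ lam : Fin n → ℝ, (∀ i, 0 ≤ lam i) →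
      0 ≤ Finset.univ.sup' Finset.univ_nonempty
        (fun ω => ∑ i : Fin n, lam i * g i ω))
    (f : Ω → ℝ)
    (hnot : ¬ (∀ (lam0 : ℝ) (lam : Fin n → ℝ), 0 ≤ lam0 → (∀ i, 0 ≤ lam i) →
      0 ≤ Finset.univ.sup' Finset.univ_nonempty
        (fun ω => lam0 * f ω + ∑ i : Fin n, lam i * g i ω))) :
    ∃ lam : Fin n → ℝ, (∀ i, 0 ≤ lam i) ∧
      (∀ ω : Ω, f ω + ∑ i : Fin n, lam i * g i ω ≤ upperExtD g f) ∧
      upperExtD g f < 0 := by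
  classical
  set S : Set ℝ := {β : ℝ | ∃ lam : Fin n → ℝ, (∀ i, 0 ≤ lam i) ∧
    ∀ ω : Ω, ∑ i : Fin n, lam i * g i ω ≤ β - f ω} with hS
  -- the generators of the relevant cone
  set v : (Fin n ⊕ Ω) → (Ω → ℝ) := Sum.elim g (fun ω => Pi.single (M := fun _ : Ω => ℝ) ω 1) with hv
  -- membership in `S` as a cone membership
  have hScone : S = (fun β : ℝ => β • (1 : Ω → ℝ) - f) ⁻¹'
      {x : Ω → ℝ | ∃ c : (Fin n ⊕ Ω) → ℝ, (∀ i, 0 ≤ c i) ∧ x = ∑ i, c i • v i} := by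
    ext β
    simp only [hS, Set.mem_setOf_eq, Set.mem_preimage]
    constructor
    · rintro ⟨lam, hlam0, hlam⟩
      refine ⟨Sum.elim lam (fun ω => β - f ω - ∑ i : Fin n, lam i * g i ω), ?_, ?_⟩
      · rintro (i | ω)
        · exact hlam0 i
        · simpa using sub_nonneg.mpr (hlam ω)
      · funext ω
        simp only [Finset.sum_apply, Pi.smul_apply, smul_eq_mul, Fintype.sum_sum_type,
          Sum.elim_inl, Sum.elim_inr, hv, Pi.sub_apply, Pi.smul_apply, Pi.one_apply,
          smul_eq_mul, mul_one]
        have : ∀ ω' : Ω, (β - f ω' - ∑ i : Fin n, lam i * g i ω') * Pi.single (M := fun _ : Ω => ℝ) ω' 1 ω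
            = if ω = ω' then β - f ω - ∑ i : Fin n, lam i * g i ω else 0 := by
          intro ω'
          rcases eq_or_ne ω ω' with rfl | h
          · simp
          · simp [Pi.single_apply, h, Ne.symm h]
        rw [Finset.sum_congr rfl (fun ω' _ => this ω'), Finset.sum_ite_eq _ ω]
        simp
    · rintro ⟨c, hc0, hc⟩
      refine ⟨fun i => c (Sum.inl i), fun i => hc0 _, fun ω => ?_⟩
      have := congrFun hc ω
      simp only [Finset.sum_apply, Pi.smul_apply, smul_eq_mul, Fintype.sum_sum_type,
        Sum.elim_inl, Sum.elim_inr, hv, Pi.sub_apply, Pi.smul_apply, Pi.one_apply,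
        mul_one] at this
      have hsingle : ∀ ω' : Ω, c (Sum.inr ω') * Pi.single (M := fun _ : Ω => ℝ) ω' 1 ω
          = if ω = ω' then c (Sum.inr ω) else 0 := by
        intro ω'
        rcases eq_or_ne ω ω' with rfl | h
        · simp
        · simp [Pi.single_apply, h, Ne.symm h]
      rw [Finset.sum_congr rfl (fun ω' _ => hsingle ω'), Finset.sum_ite_eq _ ω] at this
      simp at this
      have h0 := hc0 (Sum.inr ω)
      linarith
  -- S is closed
  have hclosed : IsClosed S := by
    rw [hScone]
    exact (cone_isClosed v).preimage (by continuity)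
  -- extract the witness of failure of avoiding sure loss
  push_neg at hnot
  obtain ⟨lam0, lam, hlam00, hlam0, hsup⟩ := hnot
  have hlam0pos : 0 < lam0 := by
    rcases hlam00.lt_or_eq with h | h
    · exact h
    · exfalso
      have := hasl lam hlam0
      rw [← h] at hsup
      simp only [zero_mul, zero_add] at hsup
      linarith
  -- a negative element of S
  set lam' : Fin n → ℝ := fun i => lam i / lam0 with hlam'
  set β0 : ℝ := Finset.univ.sup' Finset.univ_nonempty
    (fun ω => f ω + ∑ i : Fin n, lam' i * g i ω) with hβ0
  have hβ0neg : β0 < 0 := by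
    rw [hβ0, Finset.sup'_lt_iff]
    intro ω _
    have h1 : lam0 * f ω + ∑ i : Fin n, lam i * g i ω ≤
        Finset.univ.sup' Finset.univ_nonempty
          (fun ω => lam0 * f ω + ∑ i : Fin n, lam i * g i ω) :=
      Finset.le_sup' (fun ω => lam0 * f ω + ∑ i : Fin n, lam i * g i ω) (Finset.mem_univ ω)
    have h2 : lam0 * f ω + ∑ i : Fin n, lam i * g i ω < 0 := lt_of_le_of_lt h1 hsup
    have h3 : f ω + ∑ i : Fin n, lam' i * g i ω =
        (lam0 * f ω + ∑ i : Fin n, lam i * g i ω) / lam0 := by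
      rw [add_div, Finset.sum_div]
      congr 1
      · field_simp
      · exact Finset.sum_congr rfl fun i _ => by rw [hlam']; ring
    rw [h3]
    exact div_neg_of_neg_of_pos h2 hlam0pos
  have hβ0S : β0 ∈ S := by
    refine ⟨lam', fun i => div_nonneg (hlam0 i) hlam0pos.le, fun ω => ?_⟩
    have : f ω + ∑ i : Fin n, lam' i * g i ω ≤ β0 :=
      Finset.le_sup' (fun ω => f ω + ∑ i : Fin n, lam' i * g i ω) (Finset.mem_univ ω)
    linarith
  have hSne : S.Nonempty := ⟨β0, hβ0S⟩
  -- S is bounded below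
  have hbdd : BddBelow S := by
    refine ⟨Finset.univ.inf' Finset.univ_nonempty f, fun β hβ => ?_⟩
    obtain ⟨lam'', hlam''0, hlam''⟩ := hβ
    have h1 := hasl lam'' hlam''0
    obtain ⟨ω0, -, hω0⟩ := Finset.exists_mem_eq_sup' (Finset.univ_nonempty (α := Ω))
      (fun ω => ∑ i : Fin n, lam'' i * g i ω)
    have h2 : 0 ≤ ∑ i : Fin n, lam'' i * g i ω0 := by rw [← hω0]; exact h1
    have h3 := hlam'' ω0
    have h4 : f ω0 ≤ β := by linarith
    exact le_trans (Finset.inf'_le _ (Finset.mem_univ ω0)) h4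
  -- the infimum is attained
  have hmem : sInf S ∈ S := hclosed.csInf_mem hSne hbdd
  obtain ⟨lamF, hlamF0, hlamF⟩ := hmem
  have hEq : upperExtD g f = sInf S := rfl
  refine ⟨lamF, hlamF0, fun ω => ?_, ?_⟩
  · have := hlamF ω
    rw [hEq]
    linarith
  · rw [hEq]
    exact lt_of_le_of_lt (csInf_le hbdd hβ0S) hβ0neg
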